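/- arXiv:2012.13306 — 2 statements merged into one kernel-verified Lean document; each statement's English description precedes it below -/
import Mathlib

section
/- Let (X,d) be a finite metric space, h a chaining functional of log-concave type, ρ a probability measure on X, and s ∈ X a point with 0 < ρ(s) < 1. Let ρ' be the conditional probability measure of ρ on X ∖ {s}, i.e., ρ'(A) := ρ(A ∖ {s})/(1 − ρ(s)) for A ⊆ X, and set α := 1/(1 − ρ(s)). Then for every t ∈ X, ∫₀^∞ h(ρ'(B(t,r))) dr ≥ ∫₀^∞ h(ρ(B(t,r))) dr − diam(X)·(α − 1). -/
open MeasureTheory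

noncomputable section

/-- `f` is log-concave on `[0,∞)`. -/
def IsLogConcaveOn (f : ℝ → ℝ) : Prop :=
  ∀ x ∈ Set.Ici (0:ℝ), ∀ y ∈ Set.Ici (0:ℝ), ∀ t ∈ Set.Icc (0:ℝ) 1,
    f x ^ t * f y ^ (1 - t) ≤ f (t * x + (1 - t) * y)

/-- `f` is a continuous, non-increasing, log-concave probability density on `[0,∞)`
normalized so that `f 0 = 1`. -/
structure IsChainingDensity (f : ℝ → ℝ) : Prop where
  nonneg : ∀ t : ℝ, 0 ≤ t → 0 ≤ f t
  continuousOn : ContinuousOn f (Set.Ici 0)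
  antitoneOn : AntitoneOn f (Set.Ici 0)
  logConcave : IsLogConcaveOn f
  total : (∫ t in Set.Ioi (0:ℝ), f t) = 1
  normalized : f 0 = 1

/-- The complementary cumulative distribution function `F(s) = ∫_s^∞ f(t) dt`. -/
def ccdf (f : ℝ → ℝ) (s : ℝ) : ℝ := ∫ t in Set.Ioi s, f t

/-- The chaining functional `h(p) = F⁻¹(p)`, defined on `(0,1]` as the least
`s ≥ 0` with `F(s) ≤ p`. -/
def chainFn (f : ℝ → ℝ) (p : ℝ) : ℝ := sInf {s : ℝ | 0 ≤ s ∧ ccdf f s ≤ p}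

open scoped ENNReal

/-- The extended (`[0,∞]`-valued) chaining functional: `h(p)` is the least `s ≥ 0`
with `F(s) ≤ p`, and `+∞` when no such `s` exists (in particular
`h(0) = lim_{p→0⁺} h(p) ∈ (0,∞]`). -/
def chainFnE (f : ℝ → ℝ) (p : ℝ) : ℝ≥0∞ :=
  sInf {t : ℝ≥0∞ | ∃ s : ℝ, 0 ≤ s ∧ ccdf f s ≤ p ∧ t = ENNReal.ofReal s}

/-- A probability measure on a finite set, given by its point masses. -/
def IsProbOn {X : Type*} [Fintype X] (μ : X → ℝ) : Prop :=
  (∀ x, 0 ≤ μ x) ∧ (∑ x, μ x) = 1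

/-- The mass `μ(B(x,r))` of the closed ball of radius `r` around `x`. -/
def ballMass {X : Type*} [MetricSpace X] [Fintype X] (μ : X → ℝ) (x : X) (r : ℝ) : ℝ :=
  ∑ y ∈ Finset.univ.filter (fun y => dist x y ≤ r), μ y

/-- `∫₀^∞ h(μ(B(x,r))) dr`, valued in `[0,∞]`. -/
def Hint {X : Type*} [MetricSpace X] [Fintype X] (f : ℝ → ℝ) (μ : X → ℝ) (x : X) : ℝ≥0∞ :=
  ∫⁻ r in Set.Ioi (0:ℝ), chainFnE f (ballMass μ x r)

/-- The diameter of the finite metric space `X`. -/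
def fdiam (X : Type*) [MetricSpace X] : ℝ := Metric.diam (Set.univ : Set X)

/-- The conditional probability measure of `ρ` on `X ∖ {s}`:
`ρ'(x) = ρ(x)/(1 − ρ(s))` for `x ≠ s` and `ρ'(s) = 0`. -/
def dropPoint {X : Type*} (ρ : X → ℝ) (s : X) : X → ℝ :=
  fun x => letI := Classical.decEq X; if x = s then 0 else ρ x / (1 - ρ s)

variable {f : ℝ → ℝ}

lemma intOn (hf : IsChainingDensity f) : IntegrableOn f (Set.Ioi (0:ℝ)) := by
  by_contra h
  have := MeasureTheory.integral_undef h
  rw [hf.total] at this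
  exact one_ne_zero this

lemma intOn' (hf : IsChainingDensity f) {b : ℝ} (hb : 0 ≤ b) :
    IntegrableOn f (Set.Ioi b) :=
  (intOn hf).mono_set (Set.Ioi_subset_Ioi hb)

lemma submul (hf : IsChainingDensity f) {x y : ℝ} (hx : 0 ≤ x) (hy : 0 ≤ y) :
    f (x + y) ≤ f x * f y := by
  rcases eq_or_lt_of_le hx with hx0 | hx0
  · rw [← hx0, zero_add, hf.normalized, one_mul]
  rcases eq_or_lt_of_le hy with hy0 | hy0
  · rw [← hy0, add_zero, hf.normalized, mul_one]
  have hxy : 0 < x + y := by linarith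
  have ht0 : 0 < x / (x + y) := div_pos hx0 hxy
  have ht1 : x / (x + y) < 1 := by rw [div_lt_one hxy]; linarith
  have h1 := hf.logConcave (x + y) (Set.mem_Ici.mpr (by linarith)) 0
    (Set.mem_Ici.mpr le_rfl) (x / (x + y)) ⟨le_of_lt ht0, le_of_lt ht1⟩
  have h2 := hf.logConcave (x + y) (Set.mem_Ici.mpr (by linarith)) 0
    (Set.mem_Ici.mpr le_rfl) (1 - x / (x + y)) ⟨by linarith, by linarith⟩
  have he1 : x / (x + y) * (x + y) + (1 - x / (x + y)) * 0 = x := by field_simp; ring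
  have he2 : (1 - x / (x + y)) * (x + y) + (1 - (1 - x / (x + y))) * 0 = y := by
    field_simp; ring
  rw [he1, hf.normalized, Real.one_rpow, mul_one] at h1
  rw [he2, hf.normalized, Real.one_rpow, mul_one] at h2
  rcases eq_or_lt_of_le (hf.nonneg (x + y) (le_of_lt hxy)) with hz | hz
  · rw [← hz]
    exact mul_nonneg (hf.nonneg x hx) (hf.nonneg y hy)
  calc f (x + y) = f (x + y) ^ (x / (x + y) + (1 - x / (x + y))) := by norm_num
    _ = f (x + y) ^ (x / (x + y)) * f (x + y) ^ (1 - x / (x + y)) :=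
        Real.rpow_add hz _ _
    _ ≤ f x * f y := mul_le_mul h1 h2 (Real.rpow_nonneg (le_of_lt hz) _) (hf.nonneg x hx)

lemma ccdf_shift (hf : IsChainingDensity f) (b : ℝ) :
    ccdf f b = ∫ u in Set.Ioi (0:ℝ), f (u + b) := by
  set e := (Homeomorph.addRight b).toMeasurableEquiv with he
  have hcoe : ⇑e = (· + b) := rfl
  have h1 := MeasureTheory.setIntegral_map_equiv (μ := volume) e f (Set.Ioi b)
  rw [hcoe, map_add_right_eq_self volume b] at h1
  rw [ccdf, h1]
  congr 1
  ext x; simp [e]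

lemma integrableOn_shift (hf : IsChainingDensity f) {b : ℝ} (hb : 0 ≤ b) :
    IntegrableOn (fun u => f (u + b)) (Set.Ioi (0:ℝ)) := by
  have hres : Measure.map (· + b) (volume.restrict (Set.Ioi (0:ℝ)))
      = volume.restrict (Set.Ioi b) := by
    rw [show Set.Ioi (0:ℝ) = (· + b) ⁻¹' (Set.Ioi b) by ext x; simp,
      ← MeasureTheory.Measure.restrict_map (measurable_add_const b) measurableSet_Ioi,
      map_add_right_eq_self volume b]
  have hemb : MeasurableEmbedding (· + b : ℝ → ℝ) :=
    (Homeomorph.addRight b).toMeasurableEquiv.measurableEmbedding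
  have h2 : Integrable f (Measure.map (· + b) (volume.restrict (Set.Ioi (0:ℝ)))) := by
    rw [hres]; exact intOn' hf hb
  exact (hemb.integrable_map_iff).mp h2

lemma ccdf_le_f (hf : IsChainingDensity f) {b : ℝ} (hb : 0 ≤ b) : ccdf f b ≤ f b := by
  rw [ccdf_shift hf b]
  have h1 : ∫ u in Set.Ioi (0:ℝ), f (u + b) ≤ ∫ u in Set.Ioi (0:ℝ), f u * f b := by
    apply MeasureTheory.setIntegral_mono_on (integrableOn_shift hf hb)
      ((intOn hf).mul_const (f b)) measurableSet_Ioi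
    intro u hu
    exact submul hf (le_of_lt hu) hb
  calc (∫ u in Set.Ioi (0:ℝ), f (u + b)) ≤ ∫ u in Set.Ioi (0:ℝ), f u * f b := h1
    _ = (∫ u in Set.Ioi (0:ℝ), f u) * f b := by rw [MeasureTheory.integral_mul_const]
    _ = f b := by rw [hf.total, one_mul]

lemma key_ccdf (hf : IsChainingDensity f) {a c : ℝ} (ha : 0 ≤ a) (hc : 0 ≤ c) :
    (1 + c) * ccdf f (a + c) ≤ ccdf f a := by
  have hIoc : IntegrableOn f (Set.Ioc a (a + c)) :=
    (intOn' hf ha).mono_set Set.Ioc_subset_Ioi_self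
  have hsplit : ccdf f a = (∫ u in Set.Ioc a (a + c), f u) + ccdf f (a + c) := by
    rw [ccdf, ccdf, show Set.Ioi a = Set.Ioc a (a + c) ∪ Set.Ioi (a + c) from
      (Set.Ioc_union_Ioi_eq_Ioi (by linarith)).symm]
    exact MeasureTheory.setIntegral_union
      (Set.Ioc_disjoint_Ioi le_rfl)
      measurableSet_Ioi hIoc (intOn' hf (by linarith))
  have hlow : c * f (a + c) ≤ ∫ u in Set.Ioc a (a + c), f u := by
    have hmono : ∀ x ∈ Set.Ioc a (a + c), f (a + c) ≤ f x := by
      intro x hx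
      exact hf.antitoneOn (Set.mem_Ici.mpr (by linarith [hx.1]))
        (Set.mem_Ici.mpr (by linarith)) hx.2
    have := MeasureTheory.setIntegral_mono_on
      (MeasureTheory.integrableOn_const measure_Ioc_lt_top.ne) hIoc
      measurableSet_Ioc hmono
    rwa [MeasureTheory.setIntegral_const, Real.volume_real_Ioc_of_le (by linarith),
      show a + c - a = c by ring, smul_eq_mul] at this
  have hle : ccdf f (a + c) ≤ f (a + c) := ccdf_le_f hf (by linarith)
  have h2 : c * ccdf f (a + c) ≤ c * f (a + c) := mul_le_mul_of_nonneg_left hle hc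
  linarith

lemma chainFnE_anti (f : ℝ → ℝ) {p q : ℝ} (h : p ≤ q) : chainFnE f q ≤ chainFnE f p := by
  apply sInf_le_sInf
  rintro x ⟨s, hs0, hsp, rfl⟩
  exact ⟨s, hs0, hsp.trans h, rfl⟩

lemma lemA (hf : IsChainingDensity f) {q c : ℝ} (hc : 0 ≤ c) :
    chainFnE f (q / (1 + c)) ≤ chainFnE f q + ENNReal.ofReal c := by
  rw [← tsub_le_iff_right]
  apply le_sInf
  rintro x ⟨s, hs0, hsq, rfl⟩
  rw [tsub_le_iff_right, ← ENNReal.ofReal_add hs0 hc]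
  apply sInf_le
  refine ⟨s + c, by linarith, ?_, rfl⟩
  have hk := key_ccdf hf hs0 hc
  rw [le_div_iff₀ (by linarith : (0:ℝ) < 1 + c)]
  calc ccdf f (s + c) * (1 + c) = (1 + c) * ccdf f (s + c) := by ring
    _ ≤ ccdf f s := hk
    _ ≤ q := hsq

-- auxiliary lemmas on ballMass
lemma ballMass_mono {X : Type*} [MetricSpace X] [Fintype X] {μ : X → ℝ}
    (hμ : ∀ x, 0 ≤ μ x) (x : X) : Monotone (ballMass μ x) := by
  intro r r' hrr'
  refine Finset.sum_le_sum_of_subset_of_nonneg (fun y hy => ?_) (fun y _ _ => hμ y)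
  simp only [Finset.mem_filter] at hy ⊢
  exact ⟨hy.1, hy.2.trans hrr'⟩

lemma ballMass_le_one {X : Type*} [MetricSpace X] [Fintype X] {μ : X → ℝ}
    (hμ : IsProbOn μ) (x : X) (r : ℝ) : ballMass μ x r ≤ 1 := by
  rw [← hμ.2]
  exact Finset.sum_le_sum_of_subset_of_nonneg (Finset.subset_univ _) (fun y _ _ => hμ.1 y)


/-- let `ρ` be a probability measure on a finite metric space `X`,
`s ∈ X` with `0 < ρ(s) < 1`, `ρ'` the conditional measure of `ρ` on `X ∖ {s}`,
and `α = 1/(1 − ρ(s))`. Then for every `t ∈ X`,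
`∫₀^∞ h(ρ'(B(t,r))) dr ≥ ∫₀^∞ h(ρ(B(t,r))) dr − diam(X)·(α − 1)`. -/
theorem stmt16 {X : Type*} [MetricSpace X] [Fintype X]
    (f : ℝ → ℝ) (hf : IsChainingDensity f)
    (ρ : X → ℝ) (hρ : IsProbOn ρ) (s : X) (hs0 : 0 < ρ s) (hs1 : ρ s < 1) :
    ∀ t : X,
      Hint f ρ t - ENNReal.ofReal (fdiam X * (1 / (1 - ρ s) - 1)) ≤
        Hint f (dropPoint ρ s) t := by
  intro t
  classical
  set ρ' := dropPoint ρ s with hρ'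
  set c : ℝ := 1 / (1 - ρ s) - 1 with hcdef
  have hρs : 0 < 1 - ρ s := by linarith
  have hc : 0 ≤ c := by
    rw [hcdef]
    have : (1:ℝ) ≤ 1 / (1 - ρ s) := by
      rw [le_div_iff₀ hρs]; linarith
    linarith
  have h1c : 1 + c = 1 / (1 - ρ s) := by rw [hcdef]; ring
  have hρ'_nonneg : ∀ x, 0 ≤ ρ' x := by
    intro x
    simp only [hρ', dropPoint]
    split
    · exact le_rfl
    · exact div_nonneg (hρ.1 x) (le_of_lt hρs)
  set D : ℝ := dist t s with hD
  -- pointwise bound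
  have hpt : ∀ r ∈ Set.Ioi (0:ℝ),
      chainFnE f (ballMass ρ t r) ≤ chainFnE f (ballMass ρ' t r)
        + (Set.Ioo (0:ℝ) D).indicator (fun _ => ENNReal.ofReal c) r := by
    intro r hr
    by_cases hrD : D ≤ r
    · -- s is in the ball
      have hsmem : s ∈ Finset.univ.filter (fun y => dist t y ≤ r) := by
        simpa using hrD
      have hm' : ballMass ρ' t r = (ballMass ρ t r - ρ s) / (1 - ρ s) := by
        rw [ballMass, ballMass, ← Finset.sum_erase_add _ _ hsmem,
          ← Finset.sum_erase_add _ ρ hsmem]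
        have : ρ' s = 0 := by simp [hρ', dropPoint]
        rw [this, add_zero]
        rw [add_sub_cancel_right, Finset.sum_div]
        apply Finset.sum_congr rfl
        intro y hy
        have hys : y ≠ s := Finset.ne_of_mem_erase hy
        simp [hρ', dropPoint, hys]
      have hle : ballMass ρ' t r ≤ ballMass ρ t r := by
        rw [hm', div_le_iff₀ hρs]
        have h1 := ballMass_le_one hρ t r
        nlinarith
      calc chainFnE f (ballMass ρ t r) ≤ chainFnE f (ballMass ρ' t r) :=
            chainFnE_anti f hle
        _ ≤ _ := le_self_add
    · -- s not in the ball
      push_neg at hrD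
      have hsmem : s ∉ Finset.univ.filter (fun y => dist t y ≤ r) := by
        simpa using not_le.mpr hrD
      have hm' : ballMass ρ' t r = ballMass ρ t r / (1 - ρ s) := by
        rw [ballMass, ballMass, Finset.sum_div]
        apply Finset.sum_congr rfl
        intro y hy
        have hys : y ≠ s := fun h => hsmem (h ▸ hy)
        simp [hρ', dropPoint, hys]
      have hmm : ballMass ρ t r = ballMass ρ' t r / (1 + c) := by
        rw [hm', h1c]
        field_simp
      have hind : (Set.Ioo (0:ℝ) D).indicator (fun _ => ENNReal.ofReal c) r
          = ENNReal.ofReal c := Set.indicator_of_mem (Set.mem_Ioo.mpr ⟨Set.mem_Ioi.mp hr, hrD⟩) _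
      rw [hmm, hind]
      exact lemA hf hc
  -- measurability
  have hmeas' : Measurable (fun r => chainFnE f (ballMass ρ' t r)) := by
    have : Antitone (fun r => chainFnE f (ballMass ρ' t r)) := by
      intro r r' hrr'
      exact chainFnE_anti f (ballMass_mono hρ'_nonneg t hrr')
    exact this.measurable
  have hmeasind : Measurable ((Set.Ioo (0:ℝ) D).indicator
      (fun _ => ENNReal.ofReal c)) :=
    measurable_const.indicator measurableSet_Ioo
  have step1 : Hint f ρ t ≤ ∫⁻ r in Set.Ioi (0:ℝ),
      (chainFnE f (ballMass ρ' t r)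
        + (Set.Ioo (0:ℝ) D).indicator (fun _ => ENNReal.ofReal c) r) := by
    exact MeasureTheory.setLIntegral_mono (hmeas'.add hmeasind) hpt
  have step2 : (∫⁻ r in Set.Ioi (0:ℝ),
      (chainFnE f (ballMass ρ' t r)
        + (Set.Ioo (0:ℝ) D).indicator (fun _ => ENNReal.ofReal c) r))
      = Hint f ρ' t + ENNReal.ofReal c * ENNReal.ofReal D := by
    rw [MeasureTheory.lintegral_add_right _ hmeasind]
    congr 1
    rw [MeasureTheory.lintegral_indicator measurableSet_Ioo,
      MeasureTheory.setLIntegral_const, Measure.restrict_apply measurableSet_Ioo,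
      Set.inter_eq_self_of_subset_left Set.Ioo_subset_Ioi_self,
      Real.volume_Ioo, sub_zero]
  have hD_le : D ≤ fdiam X := Metric.dist_le_diam_of_mem
    (Set.finite_univ.isBounded) (Set.mem_univ t) (Set.mem_univ s)
  have step3 : ENNReal.ofReal c * ENNReal.ofReal D
      ≤ ENNReal.ofReal (fdiam X * c) := by
    rw [← ENNReal.ofReal_mul hc]
    apply ENNReal.ofReal_le_ofReal
    nlinarith [dist_nonneg (x := t) (y := s)]
  rw [tsub_le_iff_right]
  calc Hint f ρ t ≤ Hint f ρ' t + ENNReal.ofReal c * ENNReal.ofReal D := by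
        rw [← step2]; exact step1
    _ ≤ Hint f ρ' t + ENNReal.ofReal (fdiam X * c) := add_le_add le_rfl step3
end
end

section
/- Let (X,d) be a finite metric space with n points, h a chaining functional of log-concave type, μ a probability measure on X, and α ∈ [0,1). Let p be the probability measure p := (1−α)·μ + α·u, where u is the uniform probability measure on X (u(x) = 1/n for every x). Then for every t ∈ X, ∫₀^∞ h(p(B(t,r))) dr ≤ ∫₀^∞ h(μ(B(t,r))) dr + log(1/(1−α))·diam(X). -/
open MeasureTheory

noncomputable section

open scoped ENNReal

lemma restrict_shift (s c : ℝ) :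
    Measure.map (MeasurableEquiv.addRight s) (volume.restrict (Set.Ioi c)) =
      volume.restrict (Set.Ioi (c + s)) := by
  have hpre : (MeasurableEquiv.addRight s) ⁻¹' (Set.Ioi (c + s)) = Set.Ioi c := by
    ext x
    simp only [Set.mem_preimage, Set.mem_Ioi, MeasurableEquiv.coe_addRight]
    constructor <;> intro h <;> linarith
  rw [← hpre, ← MeasurableEquiv.restrict_map]
  congr 1
  show Measure.map (fun x => x + s) volume = volume
  exact map_add_right_eq_self volume s

lemma setIntegral_Ioi_comp_add (g : ℝ → ℝ) (s c : ℝ) :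
    ∫ y in Set.Ioi c, g (y + s) = ∫ x in Set.Ioi (c + s), g x := by
  rw [← restrict_shift s c, integral_map_equiv]
  rfl

lemma integrableOn_Ioi_comp_add {g : ℝ → ℝ} {s c : ℝ}
    (h : IntegrableOn g (Set.Ioi (c + s))) : IntegrableOn (fun y => g (y + s)) (Set.Ioi c) := by
  have := (integrable_map_equiv (MeasurableEquiv.addRight s) g).mp (by rwa [restrict_shift])
  exact this

lemma four_point {f : ℝ → ℝ} (hf : IsChainingDensity f) {a b c d : ℝ}
    (ha : 0 ≤ a) (hab : a ≤ b) (hbd : b ≤ d) (hac : a ≤ c) (hcd : c ≤ d)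
    (hsum : a + d = b + c) : f a * f d ≤ f b * f c := by
  rcases eq_or_lt_of_le (hab.trans hbd) with h | h
  · have hb : b = a := le_antisymm (by linarith) hab
    have hc : c = a := le_antisymm (by linarith) hac
    rw [hb, hc, ← h]
  · set θ : ℝ := (d - b) / (d - a) with hθdef
    have hda : 0 < d - a := by linarith
    have hθ0 : 0 ≤ θ := div_nonneg (by linarith) hda.le
    have hθ1 : θ ≤ 1 := by rw [hθdef, div_le_one hda]; linarith
    have hd0 : 0 ≤ d := ha.trans h.le
    have hb' : θ * a + (1 - θ) * d = b := by
      rw [hθdef]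
      field_simp
      ring
    have hc' : (1 - θ) * a + (1 - (1 - θ)) * d = c := by
      have h' : 1 - (1 - θ) = θ := by ring
      rw [h', hθdef]
      field_simp
      nlinarith [hsum]
    have h1 := hf.logConcave a ha d hd0 θ ⟨hθ0, hθ1⟩
    have h2 := hf.logConcave a ha d hd0 (1 - θ) ⟨by linarith, by linarith⟩
    rw [hb'] at h1
    rw [hc'] at h2
    have hfa : 0 ≤ f a := hf.nonneg a ha
    have hfd : 0 ≤ f d := hf.nonneg d hd0
    have key : f a * f d = (f a ^ θ * f d ^ (1 - θ)) * (f a ^ (1 - θ) * f d ^ (1 - (1 - θ))) := by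
      have e1 : f a ^ θ * f a ^ (1 - θ) = f a := by
        rw [← Real.rpow_add_of_nonneg hfa hθ0 (by linarith)]
        norm_num
      have e2 : f d ^ (1 - θ) * f d ^ (1 - (1 - θ)) = f d := by
        rw [← Real.rpow_add_of_nonneg hfd (by linarith) (by norm_num; exact hθ0)]
        norm_num
      calc f a * f d = (f a ^ θ * f a ^ (1-θ)) * (f d ^ (1-θ) * f d ^ (1-(1-θ))) := by
            rw [e1, e2]
        _ = (f a ^ θ * f d ^ (1 - θ)) * (f a ^ (1 - θ) * f d ^ (1 - (1 - θ))) := by ring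
    rw [key]
    exact mul_le_mul h1 h2 (by positivity) (hf.nonneg b (ha.trans hab))

lemma intF {f : ℝ → ℝ} (hf : IsChainingDensity f) : IntegrableOn f (Set.Ioi 0) := by
  by_contra h
  have h0 : (∫ t in Set.Ioi (0:ℝ), f t) = 0 := integral_undef h
  rw [hf.total] at h0
  exact one_ne_zero h0

lemma ccdf_nonneg {f : ℝ → ℝ} (hf : IsChainingDensity f) {s : ℝ} (hs : 0 ≤ s) :
    0 ≤ ccdf f s :=
  setIntegral_nonneg measurableSet_Ioi fun y hy => hf.nonneg y (hs.trans (le_of_lt hy))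

lemma ccdf_zero {f : ℝ → ℝ} (hf : IsChainingDensity f) : ccdf f 0 = 1 := hf.total

lemma ccdf_submul {f : ℝ → ℝ} (hf : IsChainingDensity f) {s c : ℝ} (hs : 0 ≤ s) (hc : 0 ≤ c) :
    ccdf f (s + c) ≤ ccdf f s * ccdf f c := by
  have hInt := intF hf
  have hIntc : IntegrableOn f (Set.Ioi c) := hInt.mono_set (Set.Ioi_subset_Ioi hc)
  have hIntcs : IntegrableOn f (Set.Ioi (c + s)) := hInt.mono_set (Set.Ioi_subset_Ioi (by linarith))
  have hShiftc : IntegrableOn (fun y => f (y + s)) (Set.Ioi c) := integrableOn_Ioi_comp_add hIntcs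
  have hShift0 : IntegrableOn (fun y => f (y + s)) (Set.Ioi 0) := by
    apply integrableOn_Ioi_comp_add
    rw [zero_add]
    exact hInt.mono_set (Set.Ioi_subset_Ioi hs)
  set D : ℝ → ℝ := fun y => ccdf f s * f y - f (y + s) with hD
  have hDIoi0 : IntegrableOn D (Set.Ioi 0) := (hInt.const_mul _).sub hShift0
  have hDIoic : IntegrableOn D (Set.Ioi c) := (hIntc.const_mul _).sub hShiftc
  have hDIoc : IntegrableOn D (Set.Ioc 0 c) := hDIoi0.mono_set Set.Ioc_subset_Ioi_self
  have h1 : ∫ y in Set.Ioi c, f (y + s) = ccdf f (s + c) := by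
    rw [setIntegral_Ioi_comp_add, ccdf, add_comm]
  have h2 : ∫ y in Set.Ioi (0:ℝ), f (y + s) = ccdf f s := by
    rw [setIntegral_Ioi_comp_add, zero_add, ccdf]
  have hIoiD : ∫ y in Set.Ioi c, D y = ccdf f s * ccdf f c - ccdf f (s + c) := by
    rw [hD]
    rw [integral_sub (hIntc.const_mul _) hShiftc, integral_const_mul, h1]
    rfl
  have hIoi0D : ∫ y in Set.Ioi (0:ℝ), D y = 0 := by
    rw [hD]
    rw [integral_sub (hInt.const_mul _) hShift0, integral_const_mul, h2, hf.total]
    ring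
  -- main claim: 0 ≤ ∫ Ioi c D
  have main : 0 ≤ ∫ y in Set.Ioi c, D y := by
    by_cases hA : ∀ y ∈ Set.Ioi c, 0 ≤ D y
    · exact setIntegral_nonneg measurableSet_Ioi hA
    · push_neg at hA
      obtain ⟨y1, hy1c, hy1neg⟩ := hA
      have hy1c' : c < y1 := hy1c
      have hy10 : 0 ≤ y1 := hc.trans hy1c'.le
      have hfy1s : 0 < f (y1 + s) := by
        have : 0 ≤ ccdf f s * f y1 :=
          mul_nonneg (ccdf_nonneg hf hs) (hf.nonneg _ hy10)
        simp only [hD] at hy1neg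
        linarith
      have hfy1 : 0 < f y1 := lt_of_lt_of_le hfy1s
        (hf.antitoneOn (Set.mem_Ici.2 hy10) (Set.mem_Ici.2 (by linarith)) (by linarith))
      have hneg : ∀ y ∈ Set.Ioc 0 c, D y ≤ 0 := by
        intro y hy
        have hy0 : 0 < y := hy.1
        have hyc : y ≤ c := hy.2
        have fp := four_point hf (a := y) (b := y1) (c := y + s) (d := y1 + s)
          hy0.le (by linarith) (by linarith) (by linarith) (by linarith) (by ring)
        have hfy : 0 ≤ f y := hf.nonneg y hy0.le
        have key : f y1 * D y ≤ f y * D y1 := by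
          simp only [hD]
          nlinarith [fp]
        have : f y * D y1 ≤ 0 := mul_nonpos_of_nonneg_of_nonpos hfy (by simpa [hD] using hy1neg.le)
        nlinarith [key, this, hfy1]
      have hsplit : (∫ y in Set.Ioi (0:ℝ), D y) =
          (∫ y in Set.Ioc 0 c, D y) + ∫ y in Set.Ioi c, D y := by
        rw [← Set.Ioc_union_Ioi_eq_Ioi hc]
        exact setIntegral_union (Set.Ioc_disjoint_Ioi le_rfl) measurableSet_Ioi hDIoc hDIoic
      have hIocD : (∫ y in Set.Ioc 0 c, D y) ≤ 0 :=
        setIntegral_nonpos measurableSet_Ioc hneg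
      linarith [hsplit, hIoi0D, hIocD]
  linarith [main, hIoiD]

lemma ccdf_le_exp {f : ℝ → ℝ} (hf : IsChainingDensity f) {s : ℝ} (hs : 0 ≤ s) :
    ccdf f s ≤ Real.exp (-s) := by
  have hInt := intF hf
  have hInts : IntegrableOn f (Set.Ioi s) := hInt.mono_set (Set.Ioi_subset_Ioi hs)
  have hExp : IntegrableOn (fun y => Real.exp (-y)) (Set.Ioi 0) := by
    simpa using exp_neg_integrableOn_Ioi 0 (one_pos)
  have hExps : IntegrableOn (fun y => Real.exp (-y)) (Set.Ioi s) :=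
    hExp.mono_set (Set.Ioi_subset_Ioi hs)
  set D : ℝ → ℝ := fun y => Real.exp (-y) - f y with hD
  have hDIoi0 : IntegrableOn D (Set.Ioi 0) := hExp.sub hInt
  have hDIois : IntegrableOn D (Set.Ioi s) := hExps.sub hInts
  have hDIoc : IntegrableOn D (Set.Ioc 0 s) := hDIoi0.mono_set Set.Ioc_subset_Ioi_self
  have hIoisD : ∫ y in Set.Ioi s, D y = Real.exp (-s) - ccdf f s := by
    rw [hD, integral_sub hExps hInts, integral_exp_neg_Ioi]
    rfl
  have hIoi0D : ∫ y in Set.Ioi (0:ℝ), D y = 0 := by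
    rw [hD, integral_sub hExp hInt, integral_exp_neg_Ioi_zero, hf.total]
    ring
  have main : 0 ≤ ∫ y in Set.Ioi s, D y := by
    by_cases hA : ∀ y ∈ Set.Ioi s, 0 ≤ D y
    · exact setIntegral_nonneg measurableSet_Ioi hA
    · push_neg at hA
      obtain ⟨y1, hy1s, hy1neg⟩ := hA
      have hy1s' : s < y1 := hy1s
      have hy1pos : 0 < y1 := lt_of_le_of_lt hs hy1s'
      have hfy1 : Real.exp (-y1) < f y1 := by simp only [hD] at hy1neg; linarith
      have hneg : ∀ y ∈ Set.Ioc 0 s, D y ≤ 0 := by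
        intro y hy
        have hy0 : 0 < y := hy.1
        have hyy1 : y ≤ y1 := hy.2.trans hy1s'.le
        have ht0 : 0 ≤ y / y1 := by positivity
        have ht1 : y / y1 ≤ 1 := by rw [div_le_one hy1pos]; exact hyy1
        have hlc := hf.logConcave y1 (Set.mem_Ici.2 hy1pos.le) 0 (Set.mem_Ici.2 le_rfl)
          (y / y1) ⟨ht0, ht1⟩
        rw [hf.normalized, Real.one_rpow, mul_one, mul_zero, add_zero] at hlc
        have harg : y / y1 * y1 = y := by field_simp
        rw [harg] at hlc
        have h2 : Real.exp (-y1) ^ (y / y1 : ℝ) < f y1 ^ (y / y1 : ℝ) := by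
          apply Real.rpow_lt_rpow (Real.exp_pos _).le hfy1 (by positivity)
        have h3 : Real.exp (-y1) ^ (y / y1 : ℝ) = Real.exp (-y) := by
          rw [← Real.exp_mul]
          congr 1
          field_simp
        simp only [hD]
        have := lt_of_lt_of_le (h3 ▸ h2) hlc
        linarith
      have hsplit : (∫ y in Set.Ioi (0:ℝ), D y) =
          (∫ y in Set.Ioc 0 s, D y) + ∫ y in Set.Ioi s, D y := by
        rw [← Set.Ioc_union_Ioi_eq_Ioi hs]
        exact setIntegral_union (Set.Ioc_disjoint_Ioi le_rfl) measurableSet_Ioi hDIoc hDIois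
      have hIocD : (∫ y in Set.Ioc 0 s, D y) ≤ 0 :=
        setIntegral_nonpos measurableSet_Ioc hneg
      linarith
  linarith [main, hIoisD]

lemma chainFnE_of_one_le {f : ℝ → ℝ} (hf : IsChainingDensity f) {q : ℝ} (hq : 1 ≤ q) :
    chainFnE f q = 0 := by
  refine le_antisymm ?_ zero_le
  have : (0:ℝ≥0∞) ∈ {t : ℝ≥0∞ | ∃ s : ℝ, 0 ≤ s ∧ ccdf f s ≤ q ∧ t = ENNReal.ofReal s} :=
    ⟨0, le_rfl, by rw [ccdf_zero hf]; exact hq, by simp⟩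
  exact sInf_le this

lemma chainFnE_shift {f : ℝ → ℝ} (hf : IsChainingDensity f) {β q q' : ℝ}
    (hβ0 : 0 < β) (hβ1 : β ≤ 1) (hq : β * q ≤ q') :
    chainFnE f q' ≤ chainFnE f q + ENNReal.ofReal (Real.log (1 / β)) := by
  set c := Real.log (1 / β) with hcdef
  have hc : 0 ≤ c := Real.log_nonneg (by rw [le_div_iff₀ hβ0]; linarith)
  have hexp : Real.exp (-c) = β := by
    rw [hcdef, one_div, Real.log_inv, neg_neg, Real.exp_log hβ0]
  rw [chainFnE, chainFnE, ENNReal.sInf_add]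
  refine le_iInf₂ fun t ht => ?_
  obtain ⟨s, hs0, hFs, rfl⟩ := ht
  have hmem : ENNReal.ofReal (s + c) ∈
      {t : ℝ≥0∞ | ∃ s : ℝ, 0 ≤ s ∧ ccdf f s ≤ q' ∧ t = ENNReal.ofReal s} := by
    refine ⟨s + c, by linarith, ?_, rfl⟩
    calc ccdf f (s + c) ≤ ccdf f s * ccdf f c := ccdf_submul hf hs0 hc
      _ ≤ ccdf f s * Real.exp (-c) :=
          mul_le_mul_of_nonneg_left (ccdf_le_exp hf hc) (ccdf_nonneg hf hs0)
      _ = β * ccdf f s := by rw [hexp]; ring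
      _ ≤ β * q := mul_le_mul_of_nonneg_left hFs hβ0.le
      _ ≤ q' := hq
  calc sInf _ ≤ ENNReal.ofReal (s + c) := sInf_le hmem
    _ = ENNReal.ofReal s + ENNReal.ofReal c := ENNReal.ofReal_add hs0 hc

/-- let `μ` be a probability measure on an `n`-point metric space
`X`, `α ∈ [0,1)`, and `p = (1−α)·μ + α·u` with `u` the uniform measure on `X`.
Then for every `t ∈ X`,
`∫₀^∞ h(p(B(t,r))) dr ≤ ∫₀^∞ h(μ(B(t,r))) dr + log(1/(1−α))·diam(X)`. -/
theorem stmt17 {X : Type*} [MetricSpace X] [Fintype X] [Nonempty X]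
    (f : ℝ → ℝ) (hf : IsChainingDensity f)
    (μ : X → ℝ) (hμ : IsProbOn μ) (α : ℝ) (hα : α ∈ Set.Ico (0:ℝ) 1) :
    ∀ t : X,
      Hint f (fun x => (1 - α) * μ x + α * (1 / (Fintype.card X : ℝ))) t ≤
        Hint f μ t + ENNReal.ofReal (Real.log (1 / (1 - α)) * fdiam X) := by
  intro t
  obtain ⟨hα0, hα1⟩ := hα
  have h1α : 0 < 1 - α := by linarith
  set ν : X → ℝ := fun x => (1 - α) * μ x + α * (1 / (Fintype.card X : ℝ)) with hν
  have hcard : 0 < (Fintype.card X : ℝ) := by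
    exact_mod_cast Fintype.card_pos
  set d := ENNReal.ofReal (Real.log (1 / (1 - α))) with hd
  have hlog : 0 ≤ Real.log (1 / (1 - α)) :=
    Real.log_nonneg (by rw [le_div_iff₀ h1α]; linarith)
  have hdiam0 : 0 ≤ fdiam X := Metric.diam_nonneg
  -- lower bound on the new ball mass
  have hball : ∀ r : ℝ, (1 - α) * ballMass μ t r ≤ ballMass ν t r := by
    intro r
    rw [ballMass, ballMass, Finset.mul_sum]
    refine Finset.sum_le_sum fun y _ => ?_
    have : 0 ≤ α * (1 / (Fintype.card X : ℝ)) := by positivity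
    simp only [hν]
    linarith
  -- full mass beyond the diameter
  have hfull : ∀ r : ℝ, fdiam X ≤ r → ballMass ν t r = 1 := by
    intro r hr
    have hflt : Finset.univ.filter (fun y => dist t y ≤ r) = Finset.univ := by
      refine Finset.filter_true_of_mem fun y _ => ?_
      have : dist t y ≤ Metric.diam (Set.univ : Set X) :=
        Metric.dist_le_diam_of_mem (Set.finite_univ.isBounded)
          (Set.mem_univ t) (Set.mem_univ y)
      exact this.trans (le_trans hr le_rfl)
    rw [ballMass, hflt]
    simp only [hν]
    rw [Finset.sum_add_distrib, ← Finset.mul_sum, hμ.2, Finset.sum_const,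
      Finset.card_univ, nsmul_eq_mul]
    field_simp
    ring
  -- pointwise bound on (0,∞)
  have hpt : ∀ r ∈ Set.Ioi (0:ℝ),
      chainFnE f (ballMass ν t r) ≤
        chainFnE f (ballMass μ t r) + (Set.Ioc 0 (fdiam X)).indicator (fun _ => d) r := by
    intro r hr
    by_cases hrD : r ≤ fdiam X
    · rw [Set.indicator_of_mem (Set.mem_Ioc.mpr ⟨hr, hrD⟩)]
      exact chainFnE_shift hf h1α (by linarith) (hball r)
    · rw [Set.indicator_of_notMem (fun h => hrD h.2), add_zero]
      rw [chainFnE_of_one_le hf (le_of_eq (hfull r (le_of_not_ge hrD)).symm)]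
      exact zero_le
  calc Hint f ν t
      ≤ ∫⁻ r in Set.Ioi (0:ℝ),
          (chainFnE f (ballMass μ t r) + (Set.Ioc 0 (fdiam X)).indicator (fun _ => d) r) := by
        refine lintegral_mono_ae ?_
        exact (ae_restrict_iff' measurableSet_Ioi).mpr (ae_of_all _ hpt)
    _ = Hint f μ t + ∫⁻ r in Set.Ioi (0:ℝ), (Set.Ioc 0 (fdiam X)).indicator (fun _ => d) r := by
        rw [Hint]
        exact lintegral_add_right _ (measurable_const.indicator measurableSet_Ioc)
    _ = Hint f μ t + ENNReal.ofReal (Real.log (1 / (1 - α)) * fdiam X) := by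
        congr 1
        rw [lintegral_indicator measurableSet_Ioc]
        rw [setLIntegral_const]
        rw [Measure.restrict_apply measurableSet_Ioc]
        have : Set.Ioc (0:ℝ) (fdiam X) ∩ Set.Ioi 0 = Set.Ioc 0 (fdiam X) :=
          Set.inter_eq_left.2 Set.Ioc_subset_Ioi_self
        rw [this, Real.volume_Ioc, sub_zero, ← ENNReal.ofReal_mul hlog]
end
end
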